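/- If a graph G on n vertices contains no clique of size w+1, then G is degree-majorized by some complete w-partite graph on n vertices; that is, there is a complete w-partite graph H on n vertices such that when the degree sequences of G and H are both sorted in decreasing order, each degree of G is at most the corresponding degree of H (Erdős's degree majorization). -/

import Mathlib

open Finset

open Classical in
/-- The degree sequence of a graph on `Fin n`, sorted in decreasing order. -/
noncomputable def sortedDegrees {n : ℕ} (G : SimpleGraph (Fin n)) : List ℕ :=
  ((List.ofFn fun v => G.degree v).mergeSort (fun a b => b ≤ a))


lemma lemA : ∀ (M : List ℕ) (i a : ℕ),
    M.Pairwise (fun x y => y ≤ x) → i < M.countP (fun x => decide (a ≤ x)) →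
    a ≤ M.getD i 0 := by
  intro M
  induction M with
  | nil => intro i a _ h; simp at h
  | cons x M ih =>
    intro i a hp h
    rw [List.pairwise_cons] at hp
    match i with
    | 0 =>
      obtain ⟨y, hy, hay⟩ := List.countP_pos_iff.mp h
      simp only [decide_eq_true_eq] at hay
      rcases List.mem_cons.mp hy with rfl | hy
      · simpa using hay
      · simpa using hay.trans (hp.1 y hy)
    | Nat.succ i =>
      rw [List.countP_cons] at h
      have hi : i < M.countP (fun x => decide (a ≤ x)) := by split at h <;> omega
      simpa using ih i a hp.2 hi

lemma lemC : ∀ (L : List ℕ) (i : ℕ), L.Pairwise (fun x y => y ≤ x) → i < L.length →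
    i < L.countP (fun x => decide (L.getD i 0 ≤ x)) := by
  intro L
  induction L with
  | nil => intro i _ h; simp at h
  | cons x L ih =>
    intro i hp h
    rw [List.pairwise_cons] at hp
    match i with
    | 0 =>
      refine List.countP_pos_iff.mpr ⟨x, List.mem_cons_self, by simp⟩
    | Nat.succ i =>
      have hi : i < L.length := by simpa using h
      have hgd : (x :: L).getD (i+1) 0 = L.getD i 0 := by simp
      rw [hgd, List.countP_cons]
      have hpx : L.getD i 0 ≤ x := by
        rw [List.getD_eq_getElem _ _ hi]
        exact hp.1 _ (List.getElem_mem hi)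
      have := ih i hp.2 hi
      simp only [decide_eq_true_eq, hpx, if_true]
      omega

lemma countP_finRange (n : ℕ) (q : Fin n → Bool) :
    (List.finRange n).countP q = (Finset.univ.filter (fun v => q v = true)).card := by
  rw [Fin.univ_def]
  simp [Finset.filter, Finset.card, Multiset.filter_coe, List.countP_eq_length_filter]

def partiteG {n w : ℕ} (c : Fin n → Fin w) : SimpleGraph (Fin n) :=
  SimpleGraph.mk (fun u v => c u ≠ c v) ⟨fun u v h => h.symm⟩ ⟨fun u h => h rfl⟩

open Classical in
lemma degree_partiteG {n w : ℕ} (c : Fin n → Fin w) (v : Fin n) :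
    (partiteG c).degree v = n - (univ.filter fun u => c u = c v).card := by
  have h2 : (partiteG c).degree v = (univ.filter fun u => ¬(c u = c v)).card := by
    rw [← SimpleGraph.card_neighborFinset_eq_degree]
    congr 1
    ext u
    simp only [SimpleGraph.mem_neighborFinset, mem_filter, mem_univ, true_and]
    exact ⟨fun h => fun he => (show c v ≠ c u from h) he.symm,
      fun h => show c v ≠ c u from fun he => h he.symm⟩
  have h1 : (univ.filter fun u => c u = c v).card + (univ.filter fun u => ¬(c u = c v)).card
      = n := by
    rw [Finset.card_filter_add_card_filter_not]; simp
  omega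

open Classical in
lemma countP_sortedDegrees {n : ℕ} (G : SimpleGraph (Fin n)) (p : ℕ → Bool) :
    (sortedDegrees G).countP p = (Finset.univ.filter (fun v => p (G.degree v) = true)).card := by
  rw [sortedDegrees, List.Perm.countP_eq p (List.mergeSort_perm _ _), List.ofFn_eq_map,
    List.countP_map]
  rw [Fin.univ_def]
  simp only [Finset.filter, Finset.card, Multiset.filter_coe, List.countP_eq_length_filter,
    Multiset.quot_mk_to_coe, Multiset.coe_card]
  congr 1
  apply List.filter_congr
  intro v _
  simp [Function.comp]

open Classical in
lemma card_mono {n : ℕ} (f g : Fin n → ℕ) (π : Equiv.Perm (Fin n))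
    (hfg : ∀ v, f v ≤ g (π v)) (a : ℕ) :
    (univ.filter (fun v => a ≤ f v)).card ≤ (univ.filter (fun v => a ≤ g v)).card := by
  apply Finset.card_le_card_of_injOn π
  · intro v hv
    simp only [mem_coe, mem_filter, mem_univ, true_and] at hv ⊢
    exact hv.trans (hfg v)
  · exact π.injective.injOn

open Classical in
lemma key (w : ℕ) : ∀ (n : ℕ) (G : SimpleGraph (Fin n)), G.CliqueFree (w + 1) →
    ∃ (c : Fin n → Fin w) (π : Equiv.Perm (Fin n)),
      ∀ v, G.degree v ≤ (partiteG c).degree (π v) := by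
  induction w with
  | zero =>
    intro n G hG
    have hn : ∀ v : Fin n, False := by
      intro v
      exact hG {v} ⟨by simp [SimpleGraph.isClique_iff, Set.Pairwise], by simp⟩
    exact ⟨fun v => (hn v).elim, Equiv.refl _, fun v => (hn v).elim⟩
  | succ w ih =>
    intro n G hG
    rcases Nat.eq_zero_or_pos n with h0 | hn
    · subst h0
      exact ⟨fun v => v.elim0, Equiv.refl _, fun v => v.elim0⟩
    obtain ⟨x, -, hx⟩ := Finset.exists_max_image univ (fun v => G.degree v) ⟨⟨0, hn⟩, mem_univ _⟩
    set S := G.neighborFinset x with hS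
    set m := S.card with hm
    have hmn : m ≤ n := by
      have := Finset.card_le_card (Finset.subset_univ S)
      simpa using this
    have hdx : G.degree x = m := (SimpleGraph.card_neighborFinset_eq_degree G x).symm
    set e : {a // a ∈ S} ≃ Fin m := S.equivFin with he
    set G' : SimpleGraph (Fin m) :=
      SimpleGraph.mk (fun i j => G.Adj (e.symm i) (e.symm j)) ⟨fun i j h => h.symm⟩
        ⟨fun i h => G.loopless.irrefl _ h⟩ with hG'def
    have hG' : G'.CliqueFree (w + 1) := by
      intro t ht
      refine hG (insert x (t.image (fun i => ((e.symm i : {a // a ∈ S}) : Fin n)))) ?_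
      have hinj : Function.Injective (fun i : Fin m => ((e.symm i : {a // a ∈ S}) : Fin n)) :=
        fun a b hab => e.symm.injective (Subtype.ext hab)
      have himg : G.IsNClique (w + 1)
          (t.image (fun i => ((e.symm i : {a // a ∈ S}) : Fin n))) := by
        constructor
        · intro a ha b hb hab
          simp only [coe_image, Set.mem_image, mem_coe] at ha hb
          obtain ⟨i, hi, rfl⟩ := ha
          obtain ⟨j, hj, rfl⟩ := hb
          have hij : i ≠ j := fun hh => hab (by rw [hh])
          exact ht.1 hi hj hij
        · rw [Finset.card_image_of_injective _ hinj]
          exact ht.2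
      refine himg.insert ?_
      intro b hb
      simp only [mem_image] at hb
      obtain ⟨i, hi, rfl⟩ := hb
      have hmem : ((e.symm i : {a // a ∈ S}) : Fin n) ∈ S := (e.symm i).2
      exact (SimpleGraph.mem_neighborFinset G x _).mp hmem
    obtain ⟨c', π', hcp⟩ := ih m G' hG'
    set c : Fin n → Fin (w + 1) :=
      fun v => if h : v ∈ S then (c' (e ⟨v, h⟩)).succ else 0 with hc
    have hc0 : ∀ v, c v = 0 ↔ v ∉ S := by
      intro v
      by_cases h : v ∈ S <;> simp [hc, h, Fin.succ_ne_zero]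
    set π : Equiv.Perm (Fin n) :=
      Equiv.Perm.subtypeCongr ((e.trans π').trans e.symm) (Equiv.refl _) with hπ
    refine ⟨c, π, fun v => ?_⟩
    by_cases h : v ∈ S
    · -- v ∈ S
      set j := e ⟨v, h⟩ with hj
      have hπv : π v = ((e.symm (π' j) : {a // a ∈ S}) : Fin n) := by
        rw [hπ, Equiv.Perm.subtypeCongr.left_apply _ _ h]
        simp [hj]
      have hπS : π v ∈ S := by rw [hπv]; exact (e.symm (π' j)).2
      have hcπ : c (π v) = (c' (π' j)).succ := by
        have hsub : (⟨π v, hπS⟩ : {a // a ∈ S}) = e.symm (π' j) := Subtype.ext hπv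
        rw [hc]
        simp only [hπS, dif_pos]
        rw [hsub, Equiv.apply_symm_apply]
      -- color class size
      have hclass : (univ.filter fun u => c u = c (π v)) =
          (univ.filter fun i : Fin m => c' i = c' (π' j)).image
            (fun i => ((e.symm i : {a // a ∈ S}) : Fin n)) := by
        ext u
        simp only [mem_filter, mem_univ, true_and, mem_image, hcπ]
        constructor
        · intro hu
          have huS : u ∈ S := by
            by_contra hns
            rw [(hc0 u).mpr hns] at hu
            exact (Fin.succ_ne_zero _) hu.symm
          refine ⟨e ⟨u, huS⟩, ?_, by simp⟩
          have : c u = (c' (e ⟨u, huS⟩)).succ := by simp [hc, huS]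
          rw [this] at hu
          exact Fin.succ_injective _ hu
        · rintro ⟨i, hi, rfl⟩
          have : c ((e.symm i : {a // a ∈ S}) : Fin n) = (c' i).succ := by
            have hms : ((e.symm i : {a // a ∈ S}) : Fin n) ∈ S := (e.symm i).2
            simp [hc, hms]
          rw [this, hi]
      set K := (univ.filter fun i : Fin m => c' i = c' (π' j)).card with hK
      have hinj2 : Function.Injective (fun i : Fin m => ((e.symm i : {a // a ∈ S}) : Fin n)) :=
        fun a b hab => e.symm.injective (Subtype.ext hab)
      have hclasscard : (univ.filter fun u => c u = c (π v)).card = K := by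
        rw [hclass]
        exact Finset.card_image_of_injective _ hinj2
      have hKm : K ≤ m := by
        rw [hK]
        have := Finset.card_le_card (Finset.filter_subset
          (fun i : Fin m => c' i = c' (π' j)) univ)
        simpa using this
      -- G-degree split
      have hesj : (e.symm j : {a // a ∈ S}) = ⟨v, h⟩ := by rw [hj, Equiv.symm_apply_apply]
      have hnbr : (univ.filter fun i : Fin m => G'.Adj j i).image
          (fun i => ((e.symm i : {a // a ∈ S}) : Fin n)) = G.neighborFinset v ∩ S := by
        ext u
        simp only [mem_image, mem_filter, mem_univ, true_and, mem_inter,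
          SimpleGraph.mem_neighborFinset]
        constructor
        · rintro ⟨i, hi, rfl⟩
          have : G'.Adj j i = G.Adj ((e.symm j : {a // a ∈ S}) : Fin n)
            ((e.symm i : {a // a ∈ S}) : Fin n) := rfl
          rw [this, hesj] at hi
          exact ⟨hi, (e.symm i).2⟩
        · rintro ⟨hadj, huS⟩
          refine ⟨e ⟨u, huS⟩, ?_, by simp⟩
          show G.Adj ((e.symm (e ⟨v, h⟩) : {a // a ∈ S}) : Fin n) _
          rw [Equiv.symm_apply_apply, Equiv.symm_apply_apply]
          exact hadj
      have hdegG' : G'.degree j = (G.neighborFinset v ∩ S).card := by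
        rw [← SimpleGraph.card_neighborFinset_eq_degree, SimpleGraph.neighborFinset_eq_filter,
          ← hnbr]
        exact (Finset.card_image_of_injective _ hinj2).symm
      have hout : (G.neighborFinset v \ S).card ≤ n - m := by
        have h1 : G.neighborFinset v \ S ⊆ univ \ S :=
          Finset.sdiff_subset_sdiff (Finset.subset_univ _) le_rfl
        have h2 : (univ \ S).card = n - m := by
          rw [Finset.card_sdiff_of_subset (Finset.subset_univ _)]
          simp [hm]
        rw [← h2]
        exact Finset.card_le_card h1
      have hdsplit : G.degree v = (G.neighborFinset v ∩ S).card +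
          (G.neighborFinset v \ S).card := by
        rw [← SimpleGraph.card_neighborFinset_eq_degree]
        exact (Finset.card_inter_add_card_sdiff _ _).symm
      have h1 := hcp j
      rw [degree_partiteG] at h1
      rw [degree_partiteG, hclasscard]
      omega
    · -- v ∉ S
      have hπv : π v = v := by
        rw [hπ, Equiv.Perm.subtypeCongr.right_apply _ _ h]
        rfl
      rw [hπv, degree_partiteG]
      have hcv : c v = 0 := (hc0 v).mpr h
      have hfilter : (univ.filter fun u => c u = c v) = univ \ S := by
        rw [hcv]
        ext u
        simp only [mem_filter, mem_univ, true_and, mem_sdiff]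
        exact hc0 u
      rw [hfilter, Finset.card_sdiff_of_subset (Finset.subset_univ _)]
      have hcard : (univ : Finset (Fin n)).card = n := by simp
      have hdv : G.degree v ≤ m := by rw [← hdx]; exact hx v (mem_univ v)
      omega

open Classical in
/-- Erdős's degree majorization: if `G` on `n` vertices has no clique of size `w+1`,
then `G` is degree-majorized by some complete `w`-partite graph on `n` vertices. -/
theorem stmt8 (n w : ℕ) (G : SimpleGraph (Fin n))
    (hG : G.CliqueFree (w + 1)) :
    ∃ c : Fin n → Fin w,
      ∀ i : ℕ, (sortedDegrees G).getD i 0 ≤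
        (sortedDegrees (SimpleGraph.mk (fun u v => c u ≠ c v) ⟨fun u v h => h.symm⟩
          ⟨fun u h => h rfl⟩)).getD i 0 := by
  obtain ⟨c, π, hcp⟩ := key w n G hG
  refine ⟨c, fun i => ?_⟩
  show (sortedDegrees G).getD i 0 ≤ (sortedDegrees (partiteG c)).getD i 0
  have hlenG : (sortedDegrees G).length = n := by
    rw [sortedDegrees, List.length_mergeSort, List.length_ofFn]
  have hlenH : (sortedDegrees (partiteG c)).length = n := by
    rw [sortedDegrees, List.length_mergeSort, List.length_ofFn]
  by_cases hi : i < n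
  · have htrans : ∀ a b c : ℕ, (fun a b => decide (b ≤ a)) a b = true →
        (fun a b => decide (b ≤ a)) b c = true → (fun a b => decide (b ≤ a)) a c = true := by
      intro a b c h1 h2
      simp only [decide_eq_true_eq] at *
      omega
    have htot : ∀ a b : ℕ, ((fun a b => decide (b ≤ a)) a b ||
        (fun a b => decide (b ≤ a)) b a) = true := by
      intro a b
      rcases Nat.le_total b a with h | h <;> simp [h]
    have hsortG : (sortedDegrees G).Pairwise (fun x y => y ≤ x) :=
      (List.pairwise_mergeSort htrans htot _).imp (fun h => by simpa using h)
    have hsortH : (sortedDegrees (partiteG c)).Pairwise (fun x y => y ≤ x) :=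
      (List.pairwise_mergeSort htrans htot _).imp (fun h => by simpa using h)
    set a := (sortedDegrees G).getD i 0 with ha
    have h1 : i < (sortedDegrees G).countP (fun x => decide (a ≤ x)) :=
      lemC _ i hsortG (by omega)
    have h2 : (sortedDegrees G).countP (fun x => decide (a ≤ x)) ≤
        (sortedDegrees (partiteG c)).countP (fun x => decide (a ≤ x)) := by
      rw [countP_sortedDegrees, countP_sortedDegrees]
      apply Finset.card_le_card_of_injOn π
      · intro v hv
        simp only [mem_coe, mem_filter, mem_univ, true_and, decide_eq_true_eq] at hv ⊢
        exact hv.trans (hcp v)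
      · exact π.injective.injOn
    exact lemA _ i a hsortH (lt_of_lt_of_le h1 h2)
  · rw [List.getD_eq_default _ _ (by omega)]
    exact Nat.zero_le _
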